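/- arXiv:math/0601540 — 4 statements merged into one kernel-verified Lean document; each statement's English description precedes it below -/
import Mathlib

section
/- Let M be a symmetric negative definite real n×n matrix such that M_{ij} ≥ 0 whenever i ≠ j. Then every entry of -M⁻¹ is non-negative. -/
open Matrix

/-- Let M be a symmetric negative definite real n×n matrix with non-negative
off-diagonal entries. Then every entry of -M⁻¹ is non-negative. -/
theorem stmt_0 (n : ℕ) (M : Matrix (Fin n) (Fin n) ℝ)
    (hsymm : M.IsSymm)
    (hneg : ∀ v : Fin n → ℝ, v ≠ 0 → v ⬝ᵥ (M *ᵥ v) < 0)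
    (hoff : ∀ i j : Fin n, i ≠ j → 0 ≤ M i j) :
    ∀ i j : Fin n, 0 ≤ (-(M⁻¹)) i j := by
  intro i j
  have hdet : IsUnit M.det := by
    rw [← Matrix.isUnit_iff_isUnit_det, ← Matrix.mulVec_injective_iff_isUnit]
    intro u v huv
    by_contra hne
    have h0 : M *ᵥ (u - v) = 0 := by
      rw [Matrix.mulVec_sub, huv, sub_self]
    have := hneg (u - v) (sub_ne_zero.mpr hne)
    rw [h0, dotProduct_zero] at this
    exact lt_irrefl 0 this
  have hMinv : M * M⁻¹ = 1 := Matrix.mul_nonsing_inv M hdet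
  -- x is column j of -M⁻¹
  set x : Fin n → ℝ := fun k => -(M⁻¹ k j) with hx
  have hAx : ∀ k, ((-M) *ᵥ x) k = (1 : Matrix (Fin n) (Fin n) ℝ) k j := by
    intro k
    have : ((-M) *ᵥ x) k = (M * M⁻¹) k j := by
      simp [Matrix.mulVec, Matrix.mul_apply, dotProduct, hx, mul_comm]
    rw [this, hMinv]
  -- positive/negative parts
  set xp : Fin n → ℝ := fun k => max (x k) 0 with hxp
  set xm : Fin n → ℝ := fun k => max (-(x k)) 0 with hxm
  have hxpm : ∀ k, x k = xp k - xm k := by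
    intro k; simp [hxp, hxm, max_def]; split_ifs with h1 h2 <;> linarith
  have hxp0 : ∀ k, 0 ≤ xp k := fun k => le_max_right _ _
  have hxm0 : ∀ k, 0 ≤ xm k := fun k => le_max_right _ _
  have hdisj : ∀ k, xm k * xp k = 0 := by
    intro k
    rcases le_or_gt (x k) 0 with h | h
    · simp [hxp, hxm, max_eq_right h]
    · simp [hxp, hxm, max_eq_right (by linarith : -(x k) ≤ 0)]
  -- key quadratic form estimate
  have hquad : xm ⬝ᵥ ((-M) *ᵥ xm) ≤ 0 := by
    have hsplit : xm ⬝ᵥ ((-M) *ᵥ xm) =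
        xm ⬝ᵥ ((-M) *ᵥ xp) - xm ⬝ᵥ ((-M) *ᵥ x) := by
      have : xp - xm = x := by funext k; rw [Pi.sub_apply, ← hxpm]
      rw [← this, Matrix.mulVec_sub, dotProduct_sub]
      ring
    have h1 : xm ⬝ᵥ ((-M) *ᵥ xp) ≤ 0 := by
      simp only [dotProduct, Matrix.mulVec]
      apply Finset.sum_nonpos
      intro k _
      rw [Finset.mul_sum]
      apply Finset.sum_nonpos
      intro l _
      rcases eq_or_ne k l with rfl | hk
      · simp only [Matrix.neg_apply]
        have heq : xm k * (-M k k * xp k) = -(M k k) * (xm k * xp k) := by ring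
        rw [heq, hdisj k, mul_zero]
      · simp only [Matrix.neg_apply]
        have h := mul_nonneg (mul_nonneg (hxm0 k) (hoff k l hk)) (hxp0 l)
        nlinarith [h]
    have h2 : 0 ≤ xm ⬝ᵥ ((-M) *ᵥ x) := by
      have : xm ⬝ᵥ ((-M) *ᵥ x) = xm j := by
        rw [dotProduct]
        rw [show (∑ k, xm k * ((-M) *ᵥ x) k) = ∑ k, xm k * (1 : Matrix (Fin n) (Fin n) ℝ) k j from
          Finset.sum_congr rfl fun k _ => by rw [hAx k]]
        simp [Matrix.one_apply]
      rw [this]; exact hxm0 j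
    linarith [hsplit, h1, h2]
  -- xm = 0 by negative definiteness
  have hxmzero : xm = 0 := by
    by_contra h
    have := hneg xm h
    have : (0:ℝ) < xm ⬝ᵥ ((-M) *ᵥ xm) := by
      rw [Matrix.neg_mulVec, dotProduct_neg]
      linarith
    linarith
  have hmi : xm i = 0 := by rw [hxmzero]; rfl
  have : -(x i) ≤ 0 := by
    have := le_max_left (-(x i)) (0:ℝ)
    calc -(x i) ≤ xm i := this
    _ = 0 := hmi
  simp only [hx] at this
  simpa using this
end

section
/- Let M be a symmetric negative definite real n×n matrix with non-negative off-diagonal entries, and let v be a vector with all entries strictly positive. Then the vector t = -M⁻¹v has all entries strictly positive. -/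
open Matrix

/-- Let M be a symmetric negative definite real n×n matrix with non-negative
off-diagonal entries, and v a vector with all entries strictly positive.
Then t = -M⁻¹v has all entries strictly positive. -/
theorem stmt_1 (n : ℕ) (M : Matrix (Fin n) (Fin n) ℝ)
    (hsymm : M.IsSymm)
    (hneg : ∀ w : Fin n → ℝ, w ≠ 0 → w ⬝ᵥ (M *ᵥ w) < 0)
    (hoff : ∀ i j : Fin n, i ≠ j → 0 ≤ M i j)
    (v : Fin n → ℝ) (hv : ∀ i, 0 < v i) :
    ∀ i, 0 < (-(M⁻¹ *ᵥ v)) i := by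
  have hdet : M.det ≠ 0 := by
    intro h
    rw [← Matrix.exists_mulVec_eq_zero_iff] at h
    obtain ⟨x, hx, hMx⟩ := h
    have := hneg x hx
    rw [hMx, dotProduct_zero] at this
    exact lt_irrefl 0 this
  set t : Fin n → ℝ := -(M⁻¹ *ᵥ v) with ht
  have hMt : M *ᵥ t = -v := by
    rw [ht, Matrix.mulVec_neg, Matrix.mulVec_mulVec,
      Matrix.mul_nonsing_inv _ (isUnit_iff_ne_zero.mpr hdet), Matrix.one_mulVec]
  set w : Fin n → ℝ := fun i => max (-(t i)) 0 with hw
  set p : Fin n → ℝ := fun i => max (t i) 0 with hp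
  have hw0 : ∀ i, 0 ≤ w i := fun i => le_max_right _ _
  have hp0 : ∀ i, 0 ≤ p i := fun i => le_max_right _ _
  have hwp : ∀ i, w i * p i = 0 := by
    intro i
    rcases le_total (t i) 0 with h | h
    · have hpz : p i = 0 := max_eq_right h
      simp [hpz]
    · have hwz : w i = 0 := max_eq_right (neg_nonpos_of_nonneg h)
      simp [hwz]
  have hteq : t = p - w := by
    funext i
    simp only [Pi.sub_apply, hp, hw]
    rcases le_total (t i) 0 with h | h
    · rw [max_eq_right h, max_eq_left (neg_nonneg.mpr h)]; ring
    · rw [max_eq_left h, max_eq_right (neg_nonpos_of_nonneg h)]; ring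
  have hwzero : w = 0 := by
    by_contra hne
    have hS : w ⬝ᵥ (M *ᵥ w) < 0 := hneg w hne
    have h1 : w ⬝ᵥ (M *ᵥ t) ≤ 0 := by
      rw [hMt, dotProduct_neg]
      refine neg_nonpos.mpr (Finset.sum_nonneg fun i _ => ?_)
      exact mul_nonneg (hw0 i) (hv i).le
    have h2 : 0 ≤ w ⬝ᵥ (M *ᵥ p) := by
      simp only [dotProduct, Matrix.mulVec, dotProduct]
      refine Finset.sum_nonneg fun i _ => ?_
      rw [Finset.mul_sum]
      refine Finset.sum_nonneg fun j _ => ?_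
      by_cases hij : i = j
      · subst hij
        have : w i * (M i i * p i) = M i i * (w i * p i) := by ring
        rw [this, hwp i, mul_zero]
      · exact mul_nonneg (hw0 i) (mul_nonneg (hoff i j hij) (hp0 j))
    have h3 : w ⬝ᵥ (M *ᵥ t) = w ⬝ᵥ (M *ᵥ p) - w ⬝ᵥ (M *ᵥ w) := by
      rw [hteq, Matrix.mulVec_sub, dotProduct_sub]
    linarith
  have ht0 : ∀ i, 0 ≤ t i := by
    intro i
    have hwi : max (-(t i)) 0 = 0 := congrFun hwzero i
    have hle := le_max_left (-(t i)) 0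
    rw [hwi] at hle
    linarith
  intro i
  rcases lt_or_eq_of_le (ht0 i) with h | h
  · exact h
  · exfalso
    have hsum : (0:ℝ) ≤ ∑ j, M i j * t j := by
      refine Finset.sum_nonneg fun j _ => ?_
      by_cases hij : i = j
      · subst hij; rw [← h, mul_zero]
      · exact mul_nonneg (hoff i j hij) (ht0 j)
    have : (M *ᵥ t) i = -v i := by rw [hMt]; rfl
    rw [Matrix.mulVec, dotProduct] at this
    rw [this] at hsum
    linarith [hv i]
end

section
/- Let e₁,…,eₙ be homology classes with eᵢ·eᵢ < 0, eᵢ·eⱼ ≥ 0 for i ≠ j, and suppose ω and α lie in the positive cone of a signature (1,m) intersection form with ω·eᵢ > 0 and α·eᵢ ≤ 0 for all i. Then every positive linear combination ∑aᵢeᵢ (aᵢ ≥ 0, not all zero) has negative square, and consequently the eᵢ are linearly independent. -/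
/-- Let eᵢ be classes with eᵢ·eᵢ < 0, eᵢ·eⱼ ≥ 0 for i ≠ j, and ω, α in the
positive cone of a signature (1,m) intersection form with ω·eᵢ > 0 and
α·eᵢ ≤ 0 for all i.  Then every non-negative, not-all-zero combination ∑aᵢeᵢ
has negative square, and the eᵢ are linearly independent. -/
theorem stmt_4 (V : Type*) [AddCommGroup V] [Module ℝ V]
    (B : V →ₗ[ℝ] V →ₗ[ℝ] ℝ) (hBsymm : ∀ x y, B x y = B y x)
    (W L : Submodule ℝ V) (hcompl : IsCompl W L)
    (hL : Module.finrank ℝ L = 1)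
    (hWneg : ∀ w ∈ W, w ≠ 0 → B w w < 0)
    (hLpos : ∀ l ∈ L, l ≠ 0 → 0 < B l l)
    (n : ℕ) (e : Fin n → V) (ω α : V)
    (hdiag : ∀ i, B (e i) (e i) < 0)
    (hoff : ∀ i j, i ≠ j → 0 ≤ B (e i) (e j))
    (hω : 0 < B ω ω) (hα : 0 < B α α) (hαω : 0 < B α ω)
    (hωe : ∀ i, 0 < B ω (e i)) (hαe : ∀ i, B α (e i) ≤ 0) :
    (∀ a : Fin n → ℝ, (∀ i, 0 ≤ a i) → a ≠ 0 →
      B (∑ i, a i • e i) (∑ i, a i • e i) < 0) ∧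
    LinearIndependent ℝ e := by
  -- Key lemma A: the orthogonal complement of a positive vector has no positive vectors.
  have keyA : ∀ u w : V, 0 < B u u → B u w = 0 → B w w ≤ 0 := by
    intro u w huu huw
    by_contra h
    push_neg at h
    -- projection onto L along W
    set p := L.linearProjOfIsCompl W hcompl.symm with hp
    obtain ⟨v₀, hv₀ne, hv₀⟩ := finrank_eq_one_iff'.mp hL
    obtain ⟨cu, hcu⟩ := hv₀ (p u)
    obtain ⟨cw, hcw⟩ := hv₀ (p w)
    set z := cw • u - cu • w with hz
    have hpz : p z = 0 := by
      simp [hz, map_sub, map_smul, ← hcu, ← hcw, smul_smul, mul_comm]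
    have hzW : z ∈ W := (Submodule.linearProjOfIsCompl_apply_eq_zero_iff hcompl.symm).mp hpz
    have hBzz : B z z = cw ^ 2 * B u u + cu ^ 2 * B w w := by
      have hwu : B w u = 0 := by rw [← hBsymm]; exact huw
      simp only [hz, map_sub, map_smul, LinearMap.sub_apply, LinearMap.smul_apply,
        smul_eq_mul, huw, hwu]
      ring
    have hBzz_nonneg : 0 ≤ B z z := by
      rw [hBzz]
      positivity
    have hz0 : z = 0 := by
      by_contra hzne
      exact absurd (hWneg z hzW hzne) (not_lt.mpr hBzz_nonneg)
    -- so cw • u = cu • w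
    have hco : cw • u = cu • w := by
      have := hz0
      rw [hz, sub_eq_zero] at this
      exact this
    by_cases hcw0 : cw = 0
    · -- then p w = 0, so w ∈ W, contradicting B w w > 0
      have hpw0 : p w = 0 := by rw [← hcw, hcw0, zero_smul]
      have hwW : w ∈ W := (Submodule.linearProjOfIsCompl_apply_eq_zero_iff hcompl.symm).mp hpw0
      have hwne : w ≠ 0 := by
        intro hw0
        rw [hw0] at h; simp at h
      exact absurd (hWneg w hwW hwne) (not_lt.mpr (le_of_lt h))
    · -- u = (cu/cw) • w
      have hu : u = (cu / cw) • w := by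
        have : u = cw⁻¹ • (cw • u) := by rw [smul_smul, inv_mul_cancel₀ hcw0, one_smul]
        rw [this, hco, smul_smul, div_eq_inv_mul]
      have : B u w = (cu / cw) * B w w := by rw [hu]; simp [map_smul]
      have hcu0 : cu / cw = 0 := by
        rw [huw] at this
        rcases mul_eq_zero.mp this.symm with h' | h'
        · exact h'
        · exact absurd h' (ne_of_gt h)
      have hu0 : u = 0 := by rw [hu, hcu0, zero_smul]
      rw [hu0] at huu; simp at huu
  -- Key lemma C: positivity of cone pairing
  have keyC : ∀ x : V, 0 ≤ B x x → 0 < B ω x → 0 < B α x := by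
    intro x hxx hωx
    have hωα : 0 < B ω α := by rw [hBsymm]; exact hαω
    set v := (B ω x) • α - (B ω α) • x with hv
    have hBωv : B ω v = 0 := by
      simp [hv, map_sub, map_smul, smul_eq_mul]
      ring
    have hvv : B v v ≤ 0 := keyA ω v hω hBωv
    have hexp : B v v = (B ω x) ^ 2 * B α α - 2 * (B ω x) * (B ω α) * B α x
        + (B ω α) ^ 2 * B x x := by
      have hxα : B x α = B α x := hBsymm x α
      simp only [hv, map_sub, map_smul, LinearMap.sub_apply, LinearMap.smul_apply,
        smul_eq_mul, hxα]
      ring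
    nlinarith [mul_pos (mul_pos hωx hωx) hα, mul_nonneg (mul_nonneg hωα.le hωα.le) hxx,
      mul_pos hωx hωα]
  -- expansion helper
  have expand : ∀ (c d : Fin n → ℝ), B (∑ i, c i • e i) (∑ j, d j • e j)
      = ∑ i, ∑ j, c i * (d j * B (e i) (e j)) := by
    intro c d
    simp only [map_sum, map_smul, LinearMap.sum_apply, LinearMap.smul_apply, smul_eq_mul,
      Finset.mul_sum]
    rw [Finset.sum_comm]
    congr 1; funext i; congr 1; funext j; ring
  -- Part 1
  have part1 : ∀ a : Fin n → ℝ, (∀ i, 0 ≤ a i) → a ≠ 0 →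
      B (∑ i, a i • e i) (∑ i, a i • e i) < 0 := by
    intro a ha hane
    set x := ∑ i, a i • e i with hx
    obtain ⟨j, hj⟩ := Function.ne_iff.mp hane
    have haj : 0 < a j := lt_of_le_of_ne (ha j) (Ne.symm hj)
    have hωx : 0 < B ω x := by
      rw [hx, map_sum]
      apply Finset.sum_pos' (fun i _ => by
        rw [map_smul, smul_eq_mul]; exact mul_nonneg (ha i) (le_of_lt (hωe i)))
      exact ⟨j, Finset.mem_univ j, by
        rw [map_smul, smul_eq_mul]; exact mul_pos haj (hωe j)⟩
    have hαx : B α x ≤ 0 := by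
      rw [hx, map_sum]
      apply Finset.sum_nonpos
      intro i _
      rw [map_smul, smul_eq_mul]
      exact mul_nonpos_of_nonneg_of_nonpos (ha i) (hαe i)
    by_contra hcon
    push_neg at hcon
    exact absurd (keyC x hcon hωx) (not_lt.mpr hαx)
  refine ⟨part1, ?_⟩
  rw [Fintype.linearIndependent_iff]
  intro g hg
  by_contra hgne
  push_neg at hgne
  obtain ⟨i₀, hi₀⟩ := hgne
  set a : Fin n → ℝ := fun i => max (g i) 0 with ha
  set b : Fin n → ℝ := fun i => max (-(g i)) 0 with hb
  have hab : ∀ i, a i - b i = g i := by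
    intro i; simp [ha, hb, max_def]; split_ifs with h1 h2 <;> linarith
  have habmul : ∀ i, a i * b i = 0 := by
    intro i
    rcases le_total (g i) 0 with h | h
    · have : a i = 0 := by simp [ha, h]
      rw [this, zero_mul]
    · have : b i = 0 := by simp [hb, h]
      rw [this, mul_zero]
  have hsum : ∑ i, a i • e i = ∑ i, b i • e i := by
    have : ∑ i, a i • e i - ∑ i, b i • e i = 0 := by
      rw [← Finset.sum_sub_distrib]
      rw [← hg]
      congr 1; funext i
      rw [← sub_smul, hab]
    exact sub_eq_zero.mp this
  have hcross : 0 ≤ B (∑ i, a i • e i) (∑ j, b j • e j) := by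
    rw [expand]
    apply Finset.sum_nonneg; intro i _
    apply Finset.sum_nonneg; intro j _
    by_cases hij : i = j
    · subst hij
      rw [← mul_assoc, habmul, zero_mul]
    · exact mul_nonneg (le_max_right _ _) (mul_nonneg (le_max_right _ _) (hoff i j hij))
  have hAA := hcross
  rw [← hsum] at hAA
  have hBB := hcross
  rw [hsum] at hBB
  by_cases haz : a = 0
  · have hbne : b ≠ 0 := by
      intro hb0
      apply hi₀
      have := hab i₀
      rw [haz, hb0] at this
      simpa using this.symm
    exact absurd (part1 b (fun i => le_max_right _ _) hbne) (not_lt.mpr hBB)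
  · exact absurd (part1 a (fun i => le_max_right _ _) haz) (not_lt.mpr hAA)
end

section
/- Let α be a class in the positive cone of a signature-(1,m) inner product space, vanishing on classes e₁,…,eₙ that span a negative definite subspace, with eᵢ·eⱼ ≥ 0 for i ≠ j. Then there exist sᵢ > 0 such that ∑ᵢ sᵢ eᵢ·eⱼ < 0 for every j. -/
/-- Let α have positive square and vanish on classes e₁,…,eₙ spanning a
negative definite subspace, with eᵢ·eⱼ ≥ 0 for i ≠ j.  Then there exist
sᵢ > 0 with ∑ᵢ sᵢ (eᵢ·eⱼ) < 0 for every j. -/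
theorem stmt_13 (V : Type*) [AddCommGroup V] [Module ℝ V]
    (B : V →ₗ[ℝ] V →ₗ[ℝ] ℝ) (hBsymm : ∀ x y, B x y = B y x)
    (n : ℕ) (e : Fin n → V) (α : V)
    (hnegdef : ∀ a : Fin n → ℝ, a ≠ 0 →
      B (∑ i, a i • e i) (∑ i, a i • e i) < 0)
    (hoff : ∀ i j, i ≠ j → 0 ≤ B (e i) (e j))
    (hα : 0 < B α α) (hvan : ∀ i, B α (e i) = 0) :
    ∃ s : Fin n → ℝ, (∀ i, 0 < s i) ∧ ∀ j, ∑ i, s i * B (e i) (e j) < 0 := by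
  classical
  set G : Fin n → Fin n → ℝ := fun i j => B (e i) (e j) with hG
  have key : ∀ (a : Fin n → ℝ) (x : V),
      B (∑ i, a i • e i) x = ∑ i, a i * B (e i) x := by
    intro a x
    simp [map_sum, LinearMap.sum_apply]
  have keyR : ∀ (a : Fin n → ℝ) (x : V),
      B x (∑ i, a i • e i) = ∑ i, a i * B x (e i) := by
    intro a x
    simp
  have quad : ∀ a : Fin n → ℝ,
      B (∑ i, a i • e i) (∑ i, a i • e i) = ∑ j, a j * ∑ i, a i * G i j := by
    intro a
    rw [keyR]
    refine Finset.sum_congr rfl fun j _ => ?_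
    rw [key]
  -- diagonal entries are negative
  have hGd : ∀ j, G j j < 0 := by
    intro j
    have h1 : (Pi.single j 1 : Fin n → ℝ) ≠ 0 := by
      intro h
      have := congrFun h j
      simp at this
    have h2 := hnegdef (Pi.single j 1) h1
    have h3 : (∑ i, (Pi.single j 1 : Fin n → ℝ) i • e i) = e j := by
      simp [Pi.single_apply, ite_smul]
    rw [h3] at h2
    exact h2
  -- the linear map a ↦ (j ↦ ∑ i, a i * G i j)
  let L : (Fin n → ℝ) →ₗ[ℝ] (Fin n → ℝ) :=
    { toFun := fun a j => ∑ i, a i * G i j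
      map_add' := by
        intro a b
        funext j
        simp [add_mul, Finset.sum_add_distrib]
      map_smul' := by
        intro c a
        funext j
        simp [Finset.mul_sum, mul_assoc] }
  have hInj : Function.Injective L := by
    rw [injective_iff_map_eq_zero]
    intro a ha
    by_contra hne
    have h2 := hnegdef a hne
    rw [quad] at h2
    have h0 : (∑ j, a j * ∑ i, a i * G i j) = 0 := by
      refine Finset.sum_eq_zero fun j _ => ?_
      have hj : (∑ i, a i * G i j) = 0 := congrFun ha j
      rw [hj, mul_zero]
    rw [h0] at h2
    exact lt_irrefl 0 h2
  have hSurj : Function.Surjective L :=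
    (LinearMap.injective_iff_surjective).mp hInj
  obtain ⟨s, hs⟩ := hSurj (fun _ => (-1 : ℝ))
  have hLs : ∀ j, (∑ i, s i * G i j) = -1 := fun j => congrFun hs j
  -- positive part trick: s is entrywise nonnegative
  have hs0 : ∀ i, 0 ≤ s i := by
    by_contra hcon
    push_neg at hcon
    obtain ⟨i0, hi0⟩ := hcon
    set t : Fin n → ℝ := fun i => max (-s i) 0 with ht
    have ht0 : ∀ i, 0 ≤ t i := fun i => le_max_right _ _
    have htne : t ≠ 0 := by
      intro h
      have := congrFun h i0
      simp only [ht, Pi.zero_apply] at this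
      have : -s i0 ≤ 0 := by
        rw [← this]; exact le_max_left _ _
      linarith
    have hst : ∀ i, 0 ≤ s i + t i := by
      intro i
      simp only [ht]
      rcases le_or_gt 0 (s i) with h | h
      · have : max (-s i) 0 = 0 ∨ max (-s i) 0 = -s i := by
          rcases max_choice (-s i) 0 with h' | h'
          · exact Or.inr h'
          · exact Or.inl h'
        rcases this with h' | h' <;> rw [h'] <;> linarith
      · have : max (-s i) 0 = -s i := max_eq_left (by linarith)
        rw [this]; linarith
    have hzero : ∀ i, t i * (s i + t i) = 0 := by
      intro i
      simp only [ht]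
      rcases le_or_gt 0 (s i) with h | h
      · have : max (-s i) 0 = 0 := max_eq_right (by linarith)
        rw [this, mul_comm, mul_zero]
      · have : max (-s i) 0 = -s i := max_eq_left (by linarith)
        rw [this]; ring
    -- tᵀ M t < 0
    have hE2 : (∑ j, t j * ∑ i, t i * G i j) < 0 := by
      rw [← quad]
      exact hnegdef t htne
    -- tᵀ M s = -∑ t
    have hE1 : (∑ j, t j * ∑ i, s i * G i j) = -∑ j, t j := by
      rw [← Finset.sum_neg_distrib]
      refine Finset.sum_congr rfl fun j _ => ?_
      rw [hLs j]; ring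
    -- tᵀ M (s + t) ≥ 0
    have hE3 : 0 ≤ ∑ j, t j * ∑ i, (s i + t i) * G i j := by
      refine Finset.sum_nonneg fun j _ => ?_
      rw [Finset.mul_sum]
      refine Finset.sum_nonneg fun i _ => ?_
      rcases eq_or_ne i j with rfl | hij
      · rw [← mul_assoc, hzero i, zero_mul]
      · have h1 := ht0 j
        have h2 := hst i
        have h3 := hoff i j hij
        positivity
    -- combine
    have hsplit : (∑ j, t j * ∑ i, (s i + t i) * G i j)
        = (∑ j, t j * ∑ i, s i * G i j) + (∑ j, t j * ∑ i, t i * G i j) := by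
      rw [← Finset.sum_add_distrib]
      refine Finset.sum_congr rfl fun j _ => ?_
      rw [← mul_add, ← Finset.sum_add_distrib]
      congr 1
      refine Finset.sum_congr rfl fun i _ => ?_
      ring
    have htsum : 0 ≤ ∑ j, t j := Finset.sum_nonneg fun j _ => ht0 j
    rw [hsplit, hE1] at hE3
    linarith
  -- strict positivity
  have hspos : ∀ j, 0 < s j := by
    intro j
    have hsplit : s j * G j j + ∑ i ∈ Finset.univ.erase j, s i * G i j
        = ∑ i, s i * G i j :=
      Finset.add_sum_erase Finset.univ (fun i => s i * G i j) (Finset.mem_univ j)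
    have hrest : 0 ≤ ∑ i ∈ Finset.univ.erase j, s i * G i j := by
      refine Finset.sum_nonneg fun i hi => ?_
      have hij : i ≠ j := Finset.ne_of_mem_erase hi
      exact mul_nonneg (hs0 i) (hoff i j hij)
    have h1 : s j * G j j ≤ -1 := by
      have := hLs j
      rw [← hsplit] at this
      linarith
    rcases lt_or_eq_of_le (hs0 j) with h | h
    · exact h
    · exfalso
      rw [← h, zero_mul] at h1
      linarith
  exact ⟨s, hspos, fun j => by rw [hLs j]; norm_num⟩
end
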